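/- Let K be a perfect field of characteristic p > 0 equipped with an additive real-valued valuation v, let c ≥ 0 be a real number, and let a : ℕ → K be a sequence with v(a_k) ≥ −c for every k. For m ≥ 0 set S_m = Σ_{k=0}^m a_k^{1/p^k}. Then the sequence m ↦ min{0, v(S_m)} (with the convention min{0, v(0)} = min{0, ∞} = 0) converges to a real limit as m → ∞. -/

import Mathlib

open Filter

/-- Let `K` be a perfect field of characteristic `p > 0` with an additive
real-valued valuation `v`, let `c ≥ 0`, and let `a : ℕ → K` satisfy `v (a k) ≥ −c` for all
`k`.  Setting `S_m = Σ_{k=0}^m a_k^{1/p^k}` (the `p^k`-th root taken via the inverse of the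
Frobenius equivalence), the sequence `m ↦ min{0, v(S_m)}` (with `min{0, ∞} = 0`) converges
to a real limit. -/
theorem statement10 {p : ℕ} [Fact p.Prime] {K : Type*} [Field K] [ExpChar K p]
    [CharP K p] [PerfectRing K p]
    (v : K → WithTop ℝ)
    (hv0 : ∀ x : K, v x = ⊤ ↔ x = 0)
    (hvmul : ∀ x y : K, v (x * y) = v x + v y)
    (hvadd : ∀ x y : K, min (v x) (v y) ≤ v (x + y))
    (c : ℝ) (hc : 0 ≤ c) (a : ℕ → K)
    (ha : ∀ k : ℕ, ((-c : ℝ) : WithTop ℝ) ≤ v (a k)) :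
    ∃ lim : ℝ, Tendsto
      (fun m : ℕ =>
        min 0 ((v (∑ k ∈ Finset.range (m + 1),
          (fun y : K => (frobeniusEquiv K p).symm y)^[k] (a k))).untopD 0))
      atTop (nhds lim) := by
  have hp1 : (1 : ℝ) < (p : ℝ) := by exact_mod_cast (Fact.out : p.Prime).one_lt
  have hp0 : (0 : ℝ) < (p : ℝ) := by linarith
  -- v 1 = 0
  have hv1 : v 1 = 0 := by
    have h := hvmul 1 1
    rw [one_mul] at h
    have hne : v 1 ≠ ⊤ := fun h' => one_ne_zero ((hv0 1).mp h')
    lift v 1 to ℝ using hne with r hr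
    rw [← WithTop.coe_add, WithTop.coe_eq_coe] at h
    have : r = 0 := by linarith
    exact_mod_cast this
  -- v (-x) = v x
  have hvneg : ∀ x : K, v (-x) = v x := by
    have hm1 : v (-1 : K) = 0 := by
      have h := hvmul (-1 : K) (-1)
      rw [neg_mul_neg, one_mul, hv1] at h
      have hne : v (-1 : K) ≠ ⊤ := fun h' => by
        have := (hv0 (-1)).mp h'
        simp at this
      lift v (-1 : K) to ℝ using hne with r hr
      rw [← WithTop.coe_add] at h
      have : (0 : ℝ) = r + r := by exact_mod_cast h
      have : r = 0 := by linarith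
      exact_mod_cast this
    intro x
    have := hvmul (-1 : K) x
    rw [neg_one_mul, hm1, zero_add] at this
    exact this
  -- valuation of powers
  have hvpow : ∀ (n : ℕ) (z : K), v (z ^ n) = n • v z := by
    intro n z
    induction n with
    | zero => simp [hv1]
    | succ m ih => rw [pow_succ, hvmul, ih, succ_nsmul]
  -- the p^k-th root terms
  set z : ℕ → K := fun k => (fun y : K => (frobeniusEquiv K p).symm y)^[k] (a k) with hzdef
  have hroot : ∀ (k : ℕ) (x : K), ((fun y : K => (frobeniusEquiv K p).symm y)^[k] x) ^ p ^ k = x := by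
    intro k
    induction k with
    | zero => simp
    | succ n ih =>
      intro x
      rw [Function.iterate_succ_apply, pow_succ, pow_mul, ih, frobeniusEquiv_symm_pow_p]
  have hz : ∀ k : ℕ, ((-(c / (p : ℝ) ^ k) : ℝ) : WithTop ℝ) ≤ v (z k) := by
    intro k
    rcases eq_or_ne (v (z k)) ⊤ with h | h
    · rw [h]; exact le_top
    · lift v (z k) to ℝ using h with r hr
      have hak : v (a k) = ((p ^ k : ℕ) • (r : WithTop ℝ)) := by
        rw [hr, ← hvpow]
        exact congrArg v (hroot k (a k)).symm
      have hcoe : ((p ^ k : ℕ) • (r : WithTop ℝ)) = (((p : ℝ) ^ k * r : ℝ) : WithTop ℝ) := by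
        rw [← WithTop.coe_nsmul, WithTop.coe_eq_coe, nsmul_eq_mul]
        push_cast
        ring
      have hkey : ((-c : ℝ) : WithTop ℝ) ≤ (((p : ℝ) ^ k * r : ℝ) : WithTop ℝ) := by
        rw [← hcoe, ← hak]; exact ha k
      have hkey' : -c ≤ (p : ℝ) ^ k * r := by exact_mod_cast hkey
      have hpk : (0 : ℝ) < (p : ℝ) ^ k := pow_pos hp0 k
      rw [WithTop.coe_le_coe, ← neg_div, div_le_iff₀ hpk]
      linarith [mul_comm r ((p:ℝ)^k)]
  -- key real inequality
  have key : ∀ (x t : K) (d : ℝ), 0 ≤ d → ((-d : ℝ) : WithTop ℝ) ≤ v t →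
      min 0 ((v x).untopD 0) - d ≤ min 0 ((v (x + t)).untopD 0) := by
    intro x t d hd hvt
    have hL : min 0 ((v x).untopD 0) ≤ 0 := min_le_left _ _
    cases hxt : v (x + t) with
    | top =>
      simp only [WithTop.untopD_top, min_self]
      linarith
    | coe s =>
      have hs : min (v x) (v t) ≤ (s : WithTop ℝ) := hxt ▸ hvadd x t
      cases hx : v x with
      | top =>
        rw [hx] at hs
        rw [min_eq_right le_top] at hs
        have hds : (((-d : ℝ)) : WithTop ℝ) ≤ (s : WithTop ℝ) := le_trans hvt hs
        have hds' : -d ≤ s := by exact_mod_cast hds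
        simp only [WithTop.untopD_top, WithTop.untopD_coe, min_self]
        have : -d ≤ min 0 s := le_min (by linarith) hds'
        linarith
      | coe r =>
        rw [hx] at hs
        have hmin : min r (-d) ≤ s := by
          have : min ((r : ℝ) : WithTop ℝ) (((-d : ℝ)) : WithTop ℝ) ≤ (s : WithTop ℝ) :=
            le_trans (min_le_min le_rfl hvt) hs
          exact_mod_cast this
        simp only [WithTop.untopD_coe]
        have h2 : min 0 (min r (-d)) ≤ min 0 s := min_le_min le_rfl hmin
        have h3 : min 0 r - d ≤ min (min 0 r) (-d) :=
          le_min (by linarith [min_le_left (0:ℝ) r]) (by linarith [min_le_left (0:ℝ) r])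
        linarith [min_assoc (0:ℝ) r (-d)]
  -- the partial sums
  set S : ℕ → K := fun m => ∑ k ∈ Finset.range (m + 1), z k with hSdef
  set f : ℕ → ℝ := fun m => min 0 ((v (S m)).untopD 0) with hfdef
  have hdist : ∀ m, dist (f m) (f (m + 1)) ≤ (c / p) * (1 / p) ^ m := by
    intro m
    have hstep : S (m + 1) = S m + z (m + 1) := by
      simp only [hSdef]
      exact Finset.sum_range_succ z (m + 1)
    have hd0 : (0 : ℝ) ≤ c / (p : ℝ) ^ (m + 1) := div_nonneg hc (le_of_lt (pow_pos hp0 _))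
    have h1 := key (S m) (z (m + 1)) (c / (p : ℝ) ^ (m + 1)) hd0 (hz (m + 1))
    rw [← hstep] at h1
    have h2 : S m = S (m + 1) + -z (m + 1) := by rw [hstep]; ring
    have hvz' : ((-(c / (p : ℝ) ^ (m + 1)) : ℝ) : WithTop ℝ) ≤ v (-z (m + 1)) := by
      rw [hvneg]; exact hz (m + 1)
    have h2' := key (S (m + 1)) (-z (m + 1)) (c / (p : ℝ) ^ (m + 1)) hd0 hvz'
    rw [← h2] at h2'
    have heq : c / (p : ℝ) ^ (m + 1) = (c / p) * (1 / p) ^ m := by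
      rw [div_pow, one_pow, div_mul_div_comm, mul_one, ← pow_succ']
    rw [Real.dist_eq, abs_sub_le_iff]
    constructor
    · rw [← heq]
      simp only [hfdef]
      linarith
    · rw [← heq]
      simp only [hfdef]
      linarith
  have hcauchy : CauchySeq f :=
    cauchySeq_of_le_geometric (1 / p) (c / p) (by rw [div_lt_one hp0]; linarith) hdist
  obtain ⟨l, hl⟩ := cauchySeq_tendsto_of_complete hcauchy
  exact ⟨l, hl⟩
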